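/- Recursion for the lower-bound functionals: with μ(x) real, Γ_k = (μ(i+j))_{i,j=1}^k, a_k = (μ(j))_{j=1}^k, θ_k = a_k' Γ_k^{-1} a_k, and H̄_k = (μ(i+j+1))_{i,j=0}^k, if Γ_k and Γ_{k+1} are positive definite then θ_{k+1} = θ_k + det(H̄_k)^2 / (det(Γ_k) · det(Γ_{k+1})). In particular θ_k < θ_{k+1} whenever det(H̄_k) ≠ 0. -/

import Mathlib

open Matrix

/-- Recursion for the lower-bound functionals: if `Γ_k` and
`Γ_{k+1}` are positive definite then
`θ_{k+1} = θ_k + det(H̄_k)² / (det Γ_k · det Γ_{k+1})`, where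
`θ_k = a_k' Γ_k⁻¹ a_k`, `Γ_k = (μ(i+j))_{i,j=1..k}`, `a_k = (μ(j))_{j=1..k}`,
`H̄_k = (μ(i+j+1))_{i,j=0..k}`. In particular `θ_k < θ_{k+1}` when `det H̄_k ≠ 0`. -/
theorem theta_recursion (k : ℕ) (μ : ℕ → ℝ)
    (Γk : Matrix (Fin k) (Fin k) ℝ)
    (hΓk : Γk = Matrix.of fun i j : Fin k => μ ((i : ℕ) + (j : ℕ) + 2))
    (Γk1 : Matrix (Fin (k + 1)) (Fin (k + 1)) ℝ)
    (hΓk1 : Γk1 = Matrix.of fun i j : Fin (k + 1) => μ ((i : ℕ) + (j : ℕ) + 2))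
    (hpos : Γk.PosDef) (hpos1 : Γk1.PosDef)
    (ak : Fin k → ℝ) (hak : ak = fun i : Fin k => μ ((i : ℕ) + 1))
    (ak1 : Fin (k + 1) → ℝ) (hak1 : ak1 = fun i : Fin (k + 1) => μ ((i : ℕ) + 1))
    (H : Matrix (Fin (k + 1)) (Fin (k + 1)) ℝ)
    (hH : H = Matrix.of fun i j : Fin (k + 1) => μ ((i : ℕ) + (j : ℕ) + 1)) :
    ak1 ⬝ᵥ Γk1⁻¹ *ᵥ ak1 = ak ⬝ᵥ Γk⁻¹ *ᵥ ak + H.det ^ 2 / (Γk.det * Γk1.det) ∧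
      (H.det ≠ 0 → ak ⬝ᵥ Γk⁻¹ *ᵥ ak < ak1 ⬝ᵥ Γk1⁻¹ *ᵥ ak1) := by
  classical
  have hdetk : 0 < Γk.det := hpos.det_pos
  have hdetk1 : 0 < Γk1.det := hpos1.det_pos
  have hunit : IsUnit Γk.det := isUnit_iff_ne_zero.mpr hdetk.ne'
  have hunit1 : IsUnit Γk1.det := isUnit_iff_ne_zero.mpr hdetk1.ne'
  haveI : Invertible Γk := Γk.invertibleOfIsUnitDet hunit
  set b : Fin k → ℝ := fun i => μ (k + (i : ℕ) + 2) with hb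
  set c : ℝ := μ (k + 1) with hc
  set d : ℝ := μ (k + k + 2) with hd
  set y : Fin k → ℝ := Γk⁻¹ *ᵥ ak with hy
  set w : Fin k → ℝ := Γk⁻¹ *ᵥ b with hw
  have hΓy : Γk *ᵥ y = ak := by
    rw [hy, mulVec_mulVec, mul_nonsing_inv _ hunit, one_mulVec]
  have hΓw : Γk *ᵥ w = b := by
    rw [hw, mulVec_mulVec, mul_nonsing_inv _ hunit, one_mulVec]
  set s : ℝ := d - b ⬝ᵥ w with hs
  set β : ℝ := c - b ⬝ᵥ y with hβ
  have hinv : ⅟Γk = Γk⁻¹ := invOf_eq_nonsing_inv Γk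
  -- block decomposition of Γk1
  have hblock : Γk1.submatrix finSumFinEquiv finSumFinEquiv =
      fromBlocks Γk (Matrix.of fun i (_ : Fin 1) => b i)
        (Matrix.of fun (_ : Fin 1) j => b j) (Matrix.of fun _ _ => d) := by
    ext i j
    rcases i with i | i <;> rcases j with j | j <;>
      simp [hΓk1, hΓk, hb, hd, fromBlocks] <;>
      (congr 1; omega)
  have hSchur1 : (Matrix.of (fun (_ : Fin 1) j => b j) * Γk⁻¹ *
      Matrix.of (fun i (_ : Fin 1) => b i)) 0 0 = b ⬝ᵥ w := by
    rw [hw]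
    simp only [Matrix.mul_apply, Matrix.of_apply, dotProduct, mulVec,
      Finset.sum_mul, Finset.mul_sum, mul_assoc]
    rw [Finset.sum_comm]
  have hdetΓk1 : Γk1.det = Γk.det * s := by
    rw [← det_submatrix_equiv_self finSumFinEquiv Γk1, hblock, det_fromBlocks₁₁, hinv]
    congr 1
    rw [det_fin_one, Matrix.sub_apply, hSchur1]
    simp [hs]
  have hspos : 0 < s := by nlinarith [hdetk, hdetk1, hdetΓk1]
  set t : ℝ := β / s with ht
  set u : Fin k → ℝ := y - t • w with hu
  have hΓu : Γk *ᵥ u = ak - t • b := by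
    rw [hu, mulVec_sub, mulVec_smul, hΓy, hΓw]
  -- the solution of the (k+1)-system
  have hxsolve : Γk1 *ᵥ Fin.snoc u t = ak1 := by
    funext i
    have hmv : (Γk1 *ᵥ Fin.snoc u t) i
        = ∑ j : Fin k, Γk1 i (Fin.castSucc j) * u j + Γk1 i (Fin.last k) * t := by
      simp [mulVec, dotProduct, Fin.sum_univ_castSucc]
    induction i using Fin.lastCases with
    | last =>
      have h1 : ∀ j : Fin k, Γk1 (Fin.last k) (Fin.castSucc j) = b j := by
        intro j; rw [hΓk1]; simp [hb]
      have h2 : Γk1 (Fin.last k) (Fin.last k) = d := by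
        rw [hΓk1]; simp [hd]
      have h3 : ak1 (Fin.last k) = c := by rw [hak1]; simp [hc]
      have h4 : (∑ j : Fin k, b j * u j) = b ⬝ᵥ y - t * (b ⬝ᵥ w) := by
        have : (∑ j : Fin k, b j * u j) = b ⬝ᵥ u := rfl
        rw [this, hu, dotProduct_sub, dotProduct_smul, smul_eq_mul]
      have hts : t * s = β := by rw [ht]; field_simp
      rw [hmv, h2, h3]
      simp only [h1, h4]
      rw [hs, hβ] at hts
      linear_combination hts
    | cast i =>
      have h1 : ∀ j : Fin k, Γk1 (Fin.castSucc i) (Fin.castSucc j) = Γk i j := by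
        intro j; rw [hΓk1, hΓk]; simp
      have h2 : Γk1 (Fin.castSucc i) (Fin.last k) = b i := by
        rw [hΓk1]; simp only [Matrix.of_apply, Fin.coe_castSucc, Fin.val_last, hb]
        congr 1; omega
      have h3 : ak1 (Fin.castSucc i) = ak i := by rw [hak1, hak]; simp
      have h4 : (∑ j : Fin k, Γk i j * u j) = (Γk *ᵥ u) i := rfl
      rw [hmv, h2, h3]
      simp only [h1, h4, hΓu]
      simp only [Pi.sub_apply, Pi.smul_apply, smul_eq_mul]
      ring
  have hxinv : Γk1⁻¹ *ᵥ ak1 = Fin.snoc u t := by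
    rw [← hxsolve, mulVec_mulVec, nonsing_inv_mul _ hunit1, one_mulVec]
  have e3 : ak1 (Fin.last k) = c := by rw [hak1]; simp [hc]
  have e1 : ∀ j : Fin k, ak1 (Fin.castSucc j) = ak j := by
    intro j; rw [hak1, hak]; simp
  have hθ1 : ak1 ⬝ᵥ Γk1⁻¹ *ᵥ ak1 = ak ⬝ᵥ u + c * t := by
    rw [hxinv, dotProduct, Fin.sum_univ_castSucc]
    simp only [Fin.snoc_castSucc, Fin.snoc_last, e1, e3]
    rfl
  -- symmetry
  have hsymΓ : Γkᵀ = Γk := by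
    rw [hΓk]; ext i j; simp [transpose_apply]; congr 1; omega
  have hsymN : (Γk⁻¹)ᵀ = Γk⁻¹ := by rw [transpose_nonsing_inv, hsymΓ]
  have haw : ak ⬝ᵥ w = b ⬝ᵥ y := by
    calc ak ⬝ᵥ w = ak ⬝ᵥ Γk⁻¹ *ᵥ b := by rw [hw]
      _ = ak ᵥ* Γk⁻¹ ⬝ᵥ b := dotProduct_mulVec _ _ _
      _ = ak ᵥ* (Γk⁻¹)ᵀ ⬝ᵥ b := by rw [hsymN]
      _ = (Γk⁻¹ *ᵥ ak) ⬝ᵥ b := by rw [vecMul_transpose]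
      _ = b ⬝ᵥ y := by rw [← hy, dotProduct_comm]
  have hθ2 : ak ⬝ᵥ u = ak ⬝ᵥ y - t * (b ⬝ᵥ y) := by
    rw [hu, dotProduct_sub, dotProduct_smul, smul_eq_mul, haw]
  have hθ : ak1 ⬝ᵥ Γk1⁻¹ *ᵥ ak1 = ak ⬝ᵥ y + t * β := by
    rw [hθ1, hθ2, hβ]; ring
  -- determinant of H via column rotation
  set G : Matrix (Fin k ⊕ Fin 1) (Fin k ⊕ Fin 1) ℝ :=
    fromBlocks Γk (Matrix.of fun i (_ : Fin 1) => ak i)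
      (Matrix.of fun (_ : Fin 1) j => b j) (Matrix.of fun _ _ => c) with hG
  have hSchur2 : (Matrix.of (fun (_ : Fin 1) j => b j) * Γk⁻¹ *
      Matrix.of (fun i (_ : Fin 1) => ak i)) 0 0 = b ⬝ᵥ y := by
    rw [hy]
    simp only [Matrix.mul_apply, Matrix.of_apply, dotProduct, mulVec,
      Finset.sum_mul, Finset.mul_sum, mul_assoc]
    rw [Finset.sum_comm]
  have hGdet : G.det = Γk.det * β := by
    rw [hG, det_fromBlocks₁₁, hinv]
    congr 1
    rw [det_fin_one, Matrix.sub_apply, hSchur2]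
    simp [hβ]
  have hrot : ∀ x : Fin (k + 1), ((finRotate (k + 1)) x : ℕ)
      = if (x : ℕ) = k then 0 else (x : ℕ) + 1 := by
    intro x
    rw [finRotate_succ_apply, Fin.val_add_one]
    rcases eq_or_ne x (Fin.last k) with h | h
    · simp [h]
    · have h' : (x : ℕ) ≠ k := by simpa [Fin.ext_iff] using h
      rw [if_neg h, if_neg h']
  have hHperm : G = (H.submatrix id (finRotate (k + 1))).submatrix
      finSumFinEquiv finSumFinEquiv := by
    ext i j
    rcases i with i | i <;> rcases j with j | j <;>
      · simp only [hG, fromBlocks, Matrix.of_apply, Sum.elim_inl, Sum.elim_inr,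
          Matrix.submatrix_apply, id_eq, finSumFinEquiv_apply_left,
          finSumFinEquiv_apply_right, hH, hΓk, hak, hb, hc]
        simp only [Matrix.of_apply, Fin.coe_castAdd, Fin.coe_natAdd, hrot]
        split_ifs with hcond <;> (congr 1 <;> omega)
  have hGdet2 : G.det = ((Equiv.Perm.sign (finRotate (k + 1)) : ℤ) : ℝ) * H.det := by
    rw [hHperm, det_submatrix_equiv_self, det_permute']
  have hGH : G.det ^ 2 = H.det ^ 2 := by
    rw [hGdet2, sign_finRotate]
    have hsq : (((((-1 : ℤˣ) ^ k : ℤˣ)) : ℤ) : ℝ) ^ 2 = 1 := by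
      push_cast
      rw [← pow_mul, mul_comm, pow_mul]
      norm_num
    rw [Nat.add_sub_cancel, mul_pow, hsq, one_mul]
  have hH2 : H.det ^ 2 = Γk.det ^ 2 * β ^ 2 := by
    rw [← hGH, hGdet]; ring
  have hdk0 : Γk.det ≠ 0 := hdetk.ne'
  have hs0 : s ≠ 0 := hspos.ne'
  have key : t * β = H.det ^ 2 / (Γk.det * Γk1.det) := by
    rw [hH2, hdetΓk1, ht]
    field_simp
  have part1 : ak1 ⬝ᵥ Γk1⁻¹ *ᵥ ak1 = ak ⬝ᵥ y + H.det ^ 2 / (Γk.det * Γk1.det) := by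
    rw [hθ, key]
  refine ⟨part1, fun hne => ?_⟩
  have h2 : 0 < H.det ^ 2 :=
    lt_of_le_of_ne (sq_nonneg _) (Ne.symm (pow_ne_zero 2 hne))
  have h3 : 0 < H.det ^ 2 / (Γk.det * Γk1.det) :=
    div_pos h2 (mul_pos hdetk hdetk1)
  linarith [part1]
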